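/- arXiv:1211.3601 — 2 statements merged into one kernel-verified Lean document; each statement's English description precedes it below -/
import Mathlib

section
/- Consider a stochastic blockmodel SBM([n],B,π): vertex class labels Y(v), v ∈ [n], are i.i.d. with P[Y(v)=k] = π_k, and conditionally on the labels the adjacency indicators A_{uv} for unordered pairs u ≠ v are independent Bernoulli(B_{Y(u),Y(v)}). Fix a distinguished vertex v*, set n_k = #{v ≠ v* : Y(v)=k} and D_k(v*) = #{v ≠ v* : Y(v)=k, A_{v v*}=1}, with the convention 0/0 = 0. Then the probability of the event that there exists k' ≠ Y(v*) with D_{k'}(v*)/n_{k'} > D_{Y(v*)}(v*)/n_{Y(v*)} (i.e., the classifier γ(v*) = argmax_k D_k(v*)/n_k misclassifies v* with no tie) equals Σ_{(n₁,…,n_K)} multinomial(n−1; n₁,…,n_K) · Π_{k=1}^K π_k^{n_k} · Σ_{k=1}^K π_k · P[ Bin(n_k, B_{kk})/n_k < max_{k'≠k} Bin(n_{k'}, B_{kk'})/n_{k'} ], where the outer sum ranges over all nonnegative integer vectors with n₁+⋯+n_K = n−1 and, inside the probability, Bin(n_k, B_{kk}), and Bin(n_{k'}, B_{kk'}) for k'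 ≠ k, denote mutually independent binomial random variables. -/
open Finset

/-- Unordered pairs of distinct vertices of `Fin n`, represented as ordered pairs `(u,v)` with
`u < v`. -/
abbrev EPair (n : ℕ) := {e : Fin n × Fin n // e.1 < e.2}

/-- The adjacency indicator between two (distinct) vertices, read off from the indicators on
unordered pairs. -/
def adjOf {n : ℕ} (a : EPair n → Bool) (u v : Fin n) : Bool :=
  if h : u < v then a ⟨(u, v), h⟩ else if h' : v < u then a ⟨(v, u), h'⟩ else false

/-- The probability, under the stochastic blockmodel `SBM([n],B,π)`, of the configuration `c`
consisting of the vertex class labels `c.1 : Fin n → Fin K` (i.i.d. with law `π`) and the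
adjacency indicators `c.2 : EPair n → Bool` (conditionally independent
`Bernoulli(B (c.1 u) (c.1 v))` given the labels). -/
noncomputable def sbmWeight {n K : ℕ} (B : Fin K → Fin K → ℝ) (π : Fin K → ℝ)
    (c : (Fin n → Fin K) × (EPair n → Bool)) : ℝ :=
  (∏ v, π (c.1 v)) *
    ∏ e : EPair n,
      (if c.2 e then B (c.1 e.val.1) (c.1 e.val.2) else 1 - B (c.1 e.val.1) (c.1 e.val.2))

/-- `n_k`: the number of vertices other than `v*` with class label `k`. -/
def nk {n K : ℕ} (y : Fin n → Fin K) (vstar : Fin n) (k : Fin K) : ℕ :=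
  (Finset.univ.filter (fun v => v ≠ vstar ∧ y v = k)).card

/-- `D_k(v*)`: the number of vertices other than `v*` with class label `k` adjacent to `v*`. -/
def Dk {n K : ℕ} (c : (Fin n → Fin K) × (EPair n → Bool)) (vstar : Fin n) (k : Fin K) : ℕ :=
  (Finset.univ.filter (fun v => v ≠ vstar ∧ c.1 v = k ∧ adjOf c.2 v vstar = true)).card

/-- The binomial probability mass function `f_Bin(i; m, r) = C(m,i) rⁱ (1-r)^(m-i)`. -/
noncomputable def fBin (i m : ℕ) (r : ℝ) : ℝ := (m.choose i : ℝ) * r ^ i * (1 - r) ^ (m - i)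

/-! ### Auxiliary counting lemmas -/

lemma toF_apply {β : Type*} [Fintype β] [DecidableEq β] (g : β → ℕ) (b : β) :
    (∑ b', Finsupp.single b' (g b') : β →₀ ℕ) b = g b := by
  rw [Finsupp.finset_sum_apply]
  simp [Finsupp.single_apply]

lemma card_fiber_count {V β : Type*} [Fintype V] [DecidableEq V] [Fintype β] [DecidableEq β]
    (m : β → ℕ) (hm : ∑ b, m b = Fintype.card V) :
    (Finset.univ.filter fun z : V → β =>
        ∀ b, (Finset.univ.filter fun v => z v = b).card = m b).card
      = Nat.multinomial Finset.univ m := by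
  classical
  set μ : β →₀ ℕ := ∑ b', Finsupp.single b' (m b') with hμ
  have h1 : ((∑ b, MvPolynomial.X b : MvPolynomial β ℕ)) ^ Fintype.card V
      = ∑ z : V → β, MvPolynomial.monomial (∑ v, Finsupp.single (z v) 1) (1 : ℕ) := by
    rw [← Finset.card_univ, ← Finset.prod_const, Finset.prod_univ_sum]
    rw [Fintype.piFinset_univ]
    refine Finset.sum_congr rfl fun z _ => ?_
    rw [MvPolynomial.monomial_sum_one]
    simp [MvPolynomial.X]
  have h2 : ((∑ b, MvPolynomial.X b : MvPolynomial β ℕ)) ^ Fintype.card V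
      = ∑ g ∈ Finset.piAntidiag Finset.univ (Fintype.card V),
          (Nat.multinomial Finset.univ g : MvPolynomial β ℕ) *
            MvPolynomial.monomial (∑ b', Finsupp.single b' (g b')) (1 : ℕ) := by
    rw [Finset.sum_pow_eq_sum_piAntidiag]
    refine Finset.sum_congr rfl fun g _ => ?_
    congr 1
    rw [MvPolynomial.monomial_sum_one]
    refine Finset.prod_congr rfl fun b _ => ?_
    rw [MvPolynomial.X_pow_eq_monomial]
  have hco := congrArg (MvPolynomial.coeff μ) (h1.symm.trans h2)
  rw [MvPolynomial.coeff_sum, MvPolynomial.coeff_sum] at hco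
  have hcnt : ∀ (z : V → β) (b : β), ((∑ v, Finsupp.single (z v) 1 : β →₀ ℕ)) b
      = (Finset.univ.filter fun v => z v = b).card := by
    intro z b
    rw [Finsupp.finset_sum_apply, Finset.card_filter]
    simp [Finsupp.single_apply]
  have hL : (∑ z : V → β, MvPolynomial.coeff μ
      (MvPolynomial.monomial (∑ v, Finsupp.single (z v) 1) (1:ℕ)))
      = (Finset.univ.filter fun z : V → β =>
        ∀ b, (Finset.univ.filter fun v => z v = b).card = m b).card := by
    rw [Finset.card_filter]
    refine Finset.sum_congr rfl fun z _ => ?_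
    rw [MvPolynomial.coeff_monomial]
    have hiff : ((∑ v, Finsupp.single (z v) 1 : β →₀ ℕ) = μ)
        ↔ ∀ b, (Finset.univ.filter fun v => z v = b).card = m b := by
      rw [Finsupp.ext_iff]
      refine forall_congr' fun b => ?_
      rw [hcnt, hμ, toF_apply, eq_comm]
    simp only [hiff]
  have hR : (∑ g ∈ Finset.piAntidiag Finset.univ (Fintype.card V),
      MvPolynomial.coeff μ ((Nat.multinomial Finset.univ g : MvPolynomial β ℕ) *
        MvPolynomial.monomial (∑ b', Finsupp.single b' (g b')) (1 : ℕ)))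
      = Nat.multinomial Finset.univ m := by
    have hmem : m ∈ Finset.piAntidiag (Finset.univ : Finset β) (Fintype.card V) := by
      rw [Finset.mem_piAntidiag]
      exact ⟨hm, fun i _ => Finset.mem_univ i⟩
    rw [Finset.sum_congr rfl (fun g _ => ?_)]
    · rw [Finset.sum_ite_eq' (Finset.piAntidiag Finset.univ (Fintype.card V))
        m (fun g => Nat.multinomial Finset.univ g), if_pos hmem]
    · show MvPolynomial.coeff μ _ = if g = m then Nat.multinomial Finset.univ g else 0
      rw [show ((Nat.multinomial Finset.univ g : MvPolynomial β ℕ)) =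
          MvPolynomial.C (Nat.multinomial Finset.univ g : ℕ) from
          (MvPolynomial.C_eq_coe_nat _).symm,
        MvPolynomial.coeff_C_mul, MvPolynomial.coeff_monomial]
      have hiff : ((∑ b', Finsupp.single b' (g b') : β →₀ ℕ) = μ) ↔ g = m := by
        rw [hμ, Finsupp.ext_iff, funext_iff]
        refine forall_congr' fun b => ?_
        rw [toF_apply, toF_apply]
      simp only [hiff]
      split <;> simp
  rw [hL, hR] at hco
  exact_mod_cast hco

lemma sum_group {V β : Type*} [Fintype V] [DecidableEq V] [Fintype β] [DecidableEq β]
    (w : β → ℝ) (F : (β → ℕ) → ℝ) :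
    (∑ z : V → β, (∏ v, w (z v)) * F (fun b => (univ.filter fun v => z v = b).card))
    = ∑ g ∈ Finset.piAntidiag univ (Fintype.card V),
        (Nat.multinomial Finset.univ g : ℝ) * (∏ b, w b ^ g b) * F g := by
  classical
  rw [← Finset.sum_fiberwise_of_maps_to (g := fun z : V → β =>
      fun b => (univ.filter fun v => z v = b).card)
      (t := Finset.piAntidiag univ (Fintype.card V)) ?_]
  · refine Finset.sum_congr rfl fun g hg => ?_
    have hsum : ∑ b, g b = Fintype.card V := (Finset.mem_piAntidiag.mp hg).1
    have hconst : ∀ z ∈ (univ : Finset (V → β)).filter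
        (fun z => (fun b => (univ.filter fun v => z v = b).card) = g),
        (∏ v, w (z v)) * F (fun b => (univ.filter fun v => z v = b).card)
          = (∏ b, w b ^ g b) * F g := by
      intro z hz
      have hz' : (fun b => (univ.filter fun v => z v = b).card) = g :=
        (Finset.mem_filter.mp hz).2
      rw [hz']
      congr 1
      rw [← Finset.prod_fiberwise_of_maps_to (g := z) (t := univ)
        (fun v _ => Finset.mem_univ (z v)) (fun v => w (z v))]
      refine Finset.prod_congr rfl fun b _ => ?_
      rw [Finset.prod_congr rfl (fun v hv => by
        rw [(Finset.mem_filter.mp hv).2] : ∀ v ∈ _, w (z v) = w b)]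
      rw [Finset.prod_const, ← congrFun hz' b]
    rw [Finset.sum_congr rfl hconst, Finset.sum_const, nsmul_eq_mul, ← mul_assoc]
    congr 2
    rw [← card_fiber_count g hsum]
    congr 1
    refine congrArg Finset.card (Finset.filter_congr ?_)
    intro z _
    simp [funext_iff]
  · intro z _
    rw [Finset.mem_piAntidiag]
    refine ⟨?_, fun i _ => Finset.mem_univ i⟩
    rw [← Finset.card_univ]
    exact (Finset.card_eq_sum_card_fiberwise (fun v _ => Finset.mem_univ (z v))).symm

lemma mult_split {K : ℕ} (m d : Fin K → ℕ) (hd : ∀ k, d k ≤ m k) :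
    Nat.multinomial Finset.univ
        (fun ζ : Fin K × Bool => if ζ.2 then d ζ.1 else m ζ.1 - d ζ.1)
      = Nat.multinomial Finset.univ m * ∏ k, (m k).choose (d k) := by
  classical
  set g : Fin K × Bool → ℕ := fun ζ => if ζ.2 then d ζ.1 else m ζ.1 - d ζ.1 with hg
  have hgt : ∀ k, g (k, true) = d k := fun k => rfl
  have hgf : ∀ k, g (k, false) = m k - d k := fun k => rfl
  have hsum : ∑ ζ : Fin K × Bool, g ζ = ∑ k, m k := by
    rw [Fintype.sum_prod_type]
    refine Finset.sum_congr rfl fun k _ => ?_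
    rw [Fintype.sum_bool, hgt, hgf]
    have := hd k; omega
  have key : (∏ ζ : Fin K × Bool, (g ζ).factorial) *
      (Nat.multinomial Finset.univ m * ∏ k, (m k).choose (d k))
      = (∑ ζ : Fin K × Bool, g ζ).factorial := by
    rw [Fintype.prod_prod_type]
    have hfac : ∀ k : Fin K, (∏ b : Bool, (g (k, b)).factorial) * (m k).choose (d k)
        = (m k).factorial := by
      intro k
      rw [Fintype.prod_bool, hgt, hgf]
      rw [show (d k).factorial * (m k - d k).factorial * (m k).choose (d k)
          = (m k).choose (d k) * (d k).factorial * (m k - d k).factorial by ring]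
      exact Nat.choose_mul_factorial_mul_factorial (hd k)
    calc (∏ k, ∏ b : Bool, (g (k,b)).factorial)
          * (Nat.multinomial Finset.univ m * ∏ k, (m k).choose (d k))
        = (∏ k, (∏ b : Bool, (g (k,b)).factorial) * (m k).choose (d k))
            * Nat.multinomial Finset.univ m := by
          rw [Finset.prod_mul_distrib]; ring
      _ = (∏ k, (m k).factorial) * Nat.multinomial Finset.univ m := by
          rw [Finset.prod_congr rfl fun k _ => hfac k]
      _ = (∑ k, m k).factorial := Nat.multinomial_spec _ _
      _ = (∑ ζ : Fin K × Bool, g ζ).factorial := by rw [hsum]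
  have spec := Nat.multinomial_spec (Finset.univ : Finset (Fin K × Bool)) g
  have hpos : 0 < ∏ ζ : Fin K × Bool, (g ζ).factorial :=
    Finset.prod_pos fun ζ _ => Nat.factorial_pos _
  exact Nat.eq_of_mul_eq_mul_left hpos (spec.trans key.symm)

lemma sum_prod_bernoulli {E : Type*} [Fintype E] [DecidableEq E] (X : E → ℝ) :
    (∑ a : E → Bool, ∏ e, (if a e then X e else 1 - X e)) = 1 := by
  classical
  rw [show (univ : Finset (E → Bool)) = Fintype.piFinset (fun _ => (univ : Finset Bool)) from
    (Fintype.piFinset_univ).symm]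
  rw [← Finset.prod_univ_sum (t := fun _ : E => (univ : Finset Bool))
    (f := fun e b => if b then X e else 1 - X e)]
  rw [Finset.prod_congr rfl (fun e _ => by
    rw [Fintype.sum_bool]
    norm_num : ∀ e ∈ univ, (∑ b : Bool, if b then X e else 1 - X e) = 1)]
  exact Finset.prod_const_one

/-! ### The configuration equivalence -/

section Geometry
variable {n K : ℕ}

def peF (vstar : Fin n) (v : {v : Fin n // v ≠ vstar}) : EPair n :=
  if h : v.val < vstar then ⟨(v.val, vstar), h⟩
  else ⟨(vstar, v.val), lt_of_le_of_ne (not_lt.mp h) (Ne.symm v.prop)⟩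

def epDec (vstar : Fin n) (e : EPair n) :
    {v : Fin n // v ≠ vstar} ⊕ {e : EPair n // e.val.1 ≠ vstar ∧ e.val.2 ≠ vstar} :=
  if h1 : e.val.1 = vstar then Sum.inl ⟨e.val.2, ne_of_gt (h1 ▸ e.prop)⟩
  else if h2 : e.val.2 = vstar then Sum.inl ⟨e.val.1, h1⟩
  else Sum.inr ⟨e, h1, h2⟩

lemma epDec_peF (vstar : Fin n) (v : {v : Fin n // v ≠ vstar}) :
    epDec vstar (peF vstar v) = Sum.inl v := by
  by_cases h : v.val < vstar
  · rw [peF, dif_pos h, epDec]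
    rw [dif_neg (show ¬((⟨(v.val, vstar), h⟩ : EPair n)).val.1 = vstar from v.prop)]
    rw [dif_pos rfl]
  · rw [peF, dif_neg h, epDec, dif_pos rfl]

lemma epDec_inr (vstar : Fin n)
    (e' : {e : EPair n // e.val.1 ≠ vstar ∧ e.val.2 ≠ vstar}) :
    epDec vstar e'.val = Sum.inr e' := by
  rw [epDec, dif_neg e'.prop.1, dif_neg e'.prop.2]

lemma elim_epDec (vstar : Fin n) (e : EPair n) :
    Sum.elim (peF vstar) Subtype.val (epDec vstar e) = e := by
  rw [epDec]
  by_cases h1 : e.val.1 = vstar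
  · rw [dif_pos h1]
    have h2 : ¬ (e.val.2 : Fin n) < vstar := by
      rw [← h1]; exact not_lt.mpr (le_of_lt e.prop)
    simp only [Sum.elim_inl, peF, dif_neg h2]
    exact Subtype.ext (Prod.ext h1.symm rfl)
  · rw [dif_neg h1]
    by_cases h2 : e.val.2 = vstar
    · rw [dif_pos h2]
      have hlt : (e.val.1 : Fin n) < vstar := h2 ▸ e.prop
      simp only [Sum.elim_inl, peF, dif_pos hlt]
      exact Subtype.ext (Prod.ext rfl h2.symm)
    · rw [dif_neg h2]; rfl

def epEquiv (vstar : Fin n) :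
    ({v : Fin n // v ≠ vstar} ⊕ {e : EPair n // e.val.1 ≠ vstar ∧ e.val.2 ≠ vstar}) ≃ EPair n where
  toFun := Sum.elim (peF vstar) Subtype.val
  invFun := epDec vstar
  left_inv x := by
    cases x with
    | inl v => exact epDec_peF vstar v
    | inr e' => exact epDec_inr vstar e'
  right_inv e := elim_epDec vstar e

def mkY (vstar : Fin n) (k : Fin K) (z : {v : Fin n // v ≠ vstar} → Fin K × Bool) :
    Fin n → Fin K :=
  fun v => if h : v = vstar then k else (z ⟨v, h⟩).1

def mkA (vstar : Fin n) (z : {v : Fin n // v ≠ vstar} → Fin K × Bool)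
    (a' : {e : EPair n // e.val.1 ≠ vstar ∧ e.val.2 ≠ vstar} → Bool) : EPair n → Bool :=
  fun e => Sum.elim (fun v => (z v).2) a' (epDec vstar e)

lemma mkY_vstar (vstar : Fin n) (k : Fin K) (z) : mkY vstar k z vstar = k := dif_pos rfl

lemma mkY_ne (vstar : Fin n) (k : Fin K) (z) (v : {v : Fin n // v ≠ vstar}) :
    mkY vstar k z v.val = (z v).1 := by
  rw [mkY, dif_neg v.prop]

lemma mkA_peF (vstar : Fin n) (z : {v : Fin n // v ≠ vstar} → Fin K × Bool) (a') (v) :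
    mkA vstar z a' (peF vstar v) = (z v).2 := by
  rw [mkA, epDec_peF]; rfl

lemma mkA_inr (vstar : Fin n) (z : {v : Fin n // v ≠ vstar} → Fin K × Bool) (a') (e') :
    mkA vstar z a' e'.val = a' e' := by
  rw [mkA, epDec_inr]; rfl

lemma adjOf_peF (vstar : Fin n) (a : EPair n → Bool) (v : {v : Fin n // v ≠ vstar}) :
    adjOf a v.val vstar = a (peF vstar v) := by
  by_cases h : v.val < vstar
  · rw [adjOf, dif_pos h, peF, dif_pos h]
  · have h' : vstar < v.val := lt_of_le_of_ne (not_lt.mp h) (Ne.symm v.prop)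
    rw [adjOf, dif_neg h, dif_pos h', peF, dif_neg h]

def configEquiv (vstar : Fin n) (K : ℕ) :
    (Fin K × ({v : Fin n // v ≠ vstar} → Fin K × Bool) ×
      ({e : EPair n // e.val.1 ≠ vstar ∧ e.val.2 ≠ vstar} → Bool))
    ≃ ((Fin n → Fin K) × (EPair n → Bool)) where
  toFun t := (mkY vstar t.1 t.2.1, mkA vstar t.2.1 t.2.2)
  invFun c := (c.1 vstar, fun v => (c.1 v.val, adjOf c.2 v.val vstar), fun e' => c.2 e'.val)
  left_inv t := by
    obtain ⟨k, z, a'⟩ := t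
    dsimp only
    refine Prod.ext (mkY_vstar vstar k z) (Prod.ext ?_ ?_)
    · funext v
      refine Prod.ext (mkY_ne vstar k z v) ?_
      dsimp only
      rw [adjOf_peF, mkA_peF]
    · funext e'
      exact mkA_inr vstar z a' e'
  right_inv c := by
    obtain ⟨y, a⟩ := c
    dsimp only
    refine Prod.ext ?_ ?_
    · funext v
      show mkY vstar (y vstar) (fun v => (y v.val, adjOf a v.val vstar)) v = y v
      by_cases h : v = vstar
      · subst h
        exact mkY_vstar _ _ _
      · exact mkY_ne vstar (y vstar) _ ⟨v, h⟩
    · funext e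
      show mkA vstar _ _ e = a e
      rw [mkA]
      rcases hd : epDec vstar e with v | e'
      · have he : peF vstar v = e := by
          have := elim_epDec vstar e
          rw [hd] at this
          exact this
        simp only [Sum.elim_inl]
        rw [adjOf_peF, he]
      · have he : e'.val = e := by
          have := elim_epDec vstar e
          rw [hd] at this
          exact this
        simp only [Sum.elim_inr]
        rw [he]

lemma card_filter_ne (vstar : Fin n) (p : Fin n → Prop) [DecidablePred p] :
    (Finset.univ.filter fun v => v ≠ vstar ∧ p v).card
      = (Finset.univ.filter fun v : {v : Fin n // v ≠ vstar} => p v.val).card := by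
  apply Finset.card_bij
    (fun (v : Fin n) (hv : v ∈ Finset.univ.filter fun v => v ≠ vstar ∧ p v) =>
      (⟨v, ((Finset.mem_filter.mp hv).2).1⟩ : {v : Fin n // v ≠ vstar}))
  · intro a ha
    rw [Finset.mem_filter]
    exact ⟨Finset.mem_univ _, ((Finset.mem_filter.mp ha).2).2⟩
  · intro a ha b hb hab
    exact congrArg Subtype.val hab
  · intro b hb
    refine ⟨b.val, ?_, Subtype.ext rfl⟩
    rw [Finset.mem_filter]
    exact ⟨Finset.mem_univ _, b.prop, (Finset.mem_filter.mp hb).2⟩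

lemma Dk_eq (vstar : Fin n) (k : Fin K) (z) (a') (k' : Fin K) :
    Dk (mkY vstar k z, mkA vstar z a') vstar k'
      = (Finset.univ.filter fun v : {v : Fin n // v ≠ vstar} => z v = (k', true)).card := by
  rw [Dk, card_filter_ne vstar
    (fun v => mkY vstar k z v = k' ∧ adjOf (mkA vstar z a') v vstar = true)]
  congr 1
  refine Finset.filter_congr fun v _ => ?_
  rw [mkY_ne, adjOf_peF, mkA_peF, Prod.ext_iff]

lemma nk_eq (vstar : Fin n) (k : Fin K) (z) (k' : Fin K) :
    nk (mkY vstar k z) vstar k'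
      = (Finset.univ.filter fun v : {v : Fin n // v ≠ vstar} => z v = (k', true)).card
        + (Finset.univ.filter fun v : {v : Fin n // v ≠ vstar} => z v = (k', false)).card := by
  rw [nk, card_filter_ne vstar (fun v => mkY vstar k z v = k')]
  rw [show (Finset.univ.filter fun v : {v : Fin n // v ≠ vstar} => mkY vstar k z v.val = k')
      = Finset.univ.filter fun v : {v : Fin n // v ≠ vstar} =>
          (z v = (k', true) ∨ z v = (k', false)) from Finset.filter_congr fun v _ => by
    rw [mkY_ne, Prod.ext_iff, Prod.ext_iff]
    constructor
    · intro h
      cases hzv : (z v).2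
      · right; exact ⟨h, rfl⟩
      · left; exact ⟨h, rfl⟩
    · rintro (⟨h, _⟩ | ⟨h, _⟩) <;> exact h]
  rw [Finset.filter_or]
  apply Finset.card_union_of_disjoint
  rw [Finset.disjoint_left]
  intro b hb hb'
  have h1 := (Finset.mem_filter.mp hb).2
  have h2 := (Finset.mem_filter.mp hb').2
  rw [h1] at h2
  exact absurd (congrArg Prod.snd h2) (by simp)

lemma sbmWeight_fact (vstar : Fin n) (B : Fin K → Fin K → ℝ) (π : Fin K → ℝ)
    (hBsym : ∀ k k', B k k' = B k' k) (k : Fin K) (z) (a') :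
    sbmWeight B π (mkY vstar k z, mkA vstar z a')
      = π k * (∏ v : {v : Fin n // v ≠ vstar},
            (π (z v).1 * (if (z v).2 then B (z v).1 k else 1 - B (z v).1 k)))
          * (∏ e' : {e : EPair n // e.val.1 ≠ vstar ∧ e.val.2 ≠ vstar},
              (if a' e' then B (mkY vstar k z e'.val.val.1) (mkY vstar k z e'.val.val.2)
               else 1 - B (mkY vstar k z e'.val.val.1) (mkY vstar k z e'.val.val.2))) := by
  rw [sbmWeight]
  have hvert : (∏ v, π (mkY vstar k z v))
      = π k * ∏ v : {v : Fin n // v ≠ vstar}, π ((z v).1) := by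
    rw [Finset.prod_eq_mul_prod_sdiff_singleton_of_mem (Finset.mem_univ vstar), mkY_vstar]
    congr 1
    rw [Finset.prod_subtype (Finset.univ \ {vstar})
      (fun x => by simp [Finset.mem_sdiff] : ∀ x, x ∈ Finset.univ \ {vstar} ↔ x ≠ vstar)
      (fun v => π (mkY vstar k z v))]
    exact Finset.prod_congr rfl fun v _ => by rw [mkY_ne]
  have hedge : (∏ e : EPair n,
      (if mkA vstar z a' e then B (mkY vstar k z e.val.1) (mkY vstar k z e.val.2)
       else 1 - B (mkY vstar k z e.val.1) (mkY vstar k z e.val.2)))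
      = (∏ v : {v : Fin n // v ≠ vstar},
          (if (z v).2 then B (z v).1 k else 1 - B (z v).1 k))
        * (∏ e' : {e : EPair n // e.val.1 ≠ vstar ∧ e.val.2 ≠ vstar},
            (if a' e' then B (mkY vstar k z e'.val.val.1) (mkY vstar k z e'.val.val.2)
             else 1 - B (mkY vstar k z e'.val.val.1) (mkY vstar k z e'.val.val.2))) := by
    rw [← Equiv.prod_comp (epEquiv vstar) (fun e =>
      (if mkA vstar z a' e then B (mkY vstar k z e.val.1) (mkY vstar k z e.val.2)
       else 1 - B (mkY vstar k z e.val.1) (mkY vstar k z e.val.2)))]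
    rw [Fintype.prod_sum_type]
    congr 1
    · refine Finset.prod_congr rfl fun v _ => ?_
      have hinl : (epEquiv vstar) (Sum.inl v) = peF vstar v := rfl
      rw [hinl, mkA_peF]
      by_cases h : v.val < vstar
      · rw [show peF vstar v = ⟨(v.val, vstar), h⟩ from dif_pos h]
        dsimp only
        rw [mkY_ne, mkY_vstar]
      · rw [show peF vstar v
          = ⟨(vstar, v.val), lt_of_le_of_ne (not_lt.mp h) (Ne.symm v.prop)⟩ from dif_neg h]
        dsimp only
        rw [mkY_ne, mkY_vstar, hBsym]
    · refine Finset.prod_congr rfl fun e' _ => ?_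
      have hinr : (epEquiv vstar) (Sum.inr e') = e'.val := rfl
      rw [hinr, mkA_inr]
  rw [hvert, hedge, Finset.prod_mul_distrib]
  ring

end Geometry

/-! ### The reindexing of the right-hand side -/

/-- per-vertex weight of a (label, adjacency) value -/
noncomputable def wq {K : ℕ} (π q : Fin K → ℝ) (ζ : Fin K × Bool) : ℝ :=
  π ζ.1 * (if ζ.2 then q ζ.1 else 1 - q ζ.1)

/-- misclassification indicator as a function of joint counts -/
noncomputable def indR {K : ℕ} (k : Fin K) (g : Fin K × Bool → ℕ) : ℝ :=
  if ∃ k', k' ≠ k ∧ ((g (k, true) : ℝ) / ((g (k, true) + g (k, false) : ℕ) : ℝ)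
      < (g (k', true) : ℝ) / ((g (k', true) + g (k', false) : ℕ) : ℝ)) then 1 else 0

lemma term_eq {K : ℕ} (π q : Fin K → ℝ) (k : Fin K) (m d : Fin K → ℕ)
    (hdm : ∀ k', d k' ≤ m k') :
    (Nat.multinomial Finset.univ
        (fun ζ : Fin K × Bool => if ζ.2 then d ζ.1 else m ζ.1 - d ζ.1) : ℝ)
      * (∏ ζ : Fin K × Bool, (π ζ.1 * (if ζ.2 then q ζ.1 else 1 - q ζ.1))
          ^ (if ζ.2 then d ζ.1 else m ζ.1 - d ζ.1))
      * (if ∃ k', k' ≠ k ∧ ((d k : ℝ) / ((d k + (m k - d k) : ℕ) : ℝ)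
            < (d k' : ℝ) / ((d k' + (m k' - d k') : ℕ) : ℝ)) then 1 else 0)
    = ((Nat.multinomial Finset.univ m : ℝ) * (∏ k', π k' ^ m k'))
        * ((∏ k', fBin (d k') (m k') (q k'))
          * (if ∃ k', k' ≠ k ∧ ((d k : ℝ) / (m k : ℝ) < (d k' : ℝ) / (m k' : ℝ))
             then 1 else 0)) := by
  have he : ∀ k', (d k' + (m k' - d k')) = m k' := fun k' => by have := hdm k'; omega
  have hind : (if ∃ k', k' ≠ k ∧ ((d k : ℝ) / ((d k + (m k - d k) : ℕ) : ℝ)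
        < (d k' : ℝ) / ((d k' + (m k' - d k') : ℕ) : ℝ)) then (1:ℝ) else 0)
      = (if ∃ k', k' ≠ k ∧ ((d k : ℝ) / (m k : ℝ) < (d k' : ℝ) / (m k' : ℝ))
         then (1:ℝ) else 0) := by
    simp only [he]
  rw [hind, mult_split m d hdm]
  have hpk : ∀ k' : Fin K, (∏ b : Bool, (π k' * (if b then q k' else 1 - q k'))
        ^ (if b then d k' else m k' - d k'))
      = π k' ^ m k' * (q k' ^ d k' * (1 - q k') ^ (m k' - d k')) := by
    intro k'
    rw [Fintype.prod_bool]
    simp only [ite_true, Bool.false_eq_true, ite_false]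
    rw [mul_pow, mul_pow,
      show π k' ^ d k' * q k' ^ d k' * (π k' ^ (m k' - d k') * (1 - q k') ^ (m k' - d k'))
        = (π k' ^ d k' * π k' ^ (m k' - d k')) * (q k' ^ d k' * (1 - q k') ^ (m k' - d k'))
        from by ring, ← pow_add, he k']
  have hprod : (∏ ζ : Fin K × Bool, (π ζ.1 * (if ζ.2 then q ζ.1 else 1 - q ζ.1))
        ^ (if ζ.2 then d ζ.1 else m ζ.1 - d ζ.1))
      = (∏ k', π k' ^ m k') * ((∏ k', (q k') ^ (d k')) * ∏ k', (1 - q k') ^ (m k' - d k')) := by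
    rw [Fintype.prod_prod_type]
    trans (∏ k', (π k' ^ m k' * (q k' ^ d k' * (1 - q k') ^ (m k' - d k'))))
    · exact Finset.prod_congr rfl fun k' _ => hpk k'
    · rw [Finset.prod_mul_distrib, Finset.prod_mul_distrib]
  rw [hprod]
  have hfb : (∏ k', fBin (d k') (m k') (q k'))
      = (∏ k', ((m k').choose (d k') : ℝ)) * ((∏ k', (q k') ^ (d k'))
          * ∏ k', (1 - q k') ^ (m k' - d k')) := by
    simp only [fBin]
    rw [Finset.prod_mul_distrib, Finset.prod_mul_distrib, mul_assoc]
  rw [hfb]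
  push_cast
  ring

lemma reindex {n K : ℕ} (hn : 2 ≤ n) (π q : Fin K → ℝ) (k : Fin K) :
    (∑ g ∈ Finset.piAntidiag Finset.univ (n - 1),
      (Nat.multinomial Finset.univ g : ℝ)
        * (∏ ζ : Fin K × Bool, wq π q ζ ^ g ζ)
        * indR k g)
  = ∑ m ∈ Finset.univ.filter (fun m : Fin K → Fin n => ∑ k, (m k).val = n - 1),
      ∑ d ∈ Finset.univ.filter (fun d : Fin K → Fin n => ∀ k', (d k').val ≤ (m k').val),
        ((Nat.multinomial Finset.univ (fun k => (m k).val) : ℝ) * (∏ k', π k' ^ (m k').val))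
          * ((∏ k', fBin (d k').val (m k').val (q k'))
            * (if ∃ k', k' ≠ k ∧ (((d k).val : ℝ) / ((m k).val : ℝ)
                < ((d k').val : ℝ) / ((m k').val : ℝ)) then 1 else 0)) := by
  classical
  have hn1 : n - 1 < n := Nat.sub_lt (by omega) one_pos
  rw [← Finset.sum_finset_product'
    (Finset.univ.filter (fun p : (Fin K → Fin n) × (Fin K → Fin n) =>
      (∑ k', (p.1 k').val) = n - 1 ∧ ∀ k', (p.2 k').val ≤ (p.1 k').val))
    _ _ (fun p => by simp)]
  symm
  refine Finset.sum_bij'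
    (i := fun p (hp : p ∈ Finset.univ.filter (fun p : (Fin K → Fin n) × (Fin K → Fin n) =>
      (∑ k', (p.1 k').val) = n - 1 ∧ ∀ k', (p.2 k').val ≤ (p.1 k').val)) =>
        fun ζ : Fin K × Bool =>
      if ζ.2 then (p.2 ζ.1).val else (p.1 ζ.1).val - (p.2 ζ.1).val)
    (j := fun g (hg : g ∈ Finset.piAntidiag Finset.univ (n-1)) =>
      (fun k' => ⟨g (k', true) + g (k', false), by
        have hs : (∑ ζ : Fin K × Bool, g ζ) = n - 1 := (Finset.mem_piAntidiag.mp hg).1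
        have hle : g (k', true) + g (k', false) ≤ ∑ ζ : Fin K × Bool, g ζ := by
          rw [← Finset.sum_pair (show ((k', true) : Fin K × Bool) ≠ (k', false) by simp)]
          exact Finset.sum_le_sum_of_subset (Finset.subset_univ _)
        omega⟩,
      fun k' => ⟨g (k', true), by
        have hs : (∑ ζ : Fin K × Bool, g ζ) = n - 1 := (Finset.mem_piAntidiag.mp hg).1
        have hle : g (k', true) ≤ ∑ ζ : Fin K × Bool, g ζ :=
          Finset.single_le_sum (fun _ _ => Nat.zero_le _) (Finset.mem_univ _)
        omega⟩))
    ?_ ?_ ?_ ?_ ?_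
  · intro p hp
    obtain ⟨hm, hd⟩ := (Finset.mem_filter.mp hp).2
    rw [Finset.mem_piAntidiag]
    refine ⟨?_, fun i _ => Finset.mem_univ i⟩
    rw [Fintype.sum_prod_type]
    have hb : ∀ k' : Fin K, (∑ b : Bool, if (k', b).2 then (p.2 (k', b).1).val
        else (p.1 (k', b).1).val - (p.2 (k', b).1).val) = (p.1 k').val := by
      intro k'
      rw [Fintype.sum_bool]
      have := hd k'
      simp only [ite_true, Bool.false_eq_true, ite_false]
      omega
    rw [Finset.sum_congr rfl fun k' _ => hb k']
    exact hm
  · intro g hg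
    have hs : (∑ ζ : Fin K × Bool, g ζ) = n - 1 := (Finset.mem_piAntidiag.mp hg).1
    rw [Finset.mem_filter]
    refine ⟨Finset.mem_univ _, ?_, fun k' => Nat.le_add_right _ _⟩
    show (∑ k', (g (k', true) + g (k', false))) = n - 1
    rw [← hs, Fintype.sum_prod_type]
    exact Finset.sum_congr rfl fun k' _ => (Fintype.sum_bool (fun b => g (k', b))).symm
  · intro p hp
    obtain ⟨hm, hd⟩ := (Finset.mem_filter.mp hp).2
    refine Prod.ext ?_ ?_
    · funext k'
      apply Fin.ext
      show (p.2 k').val + ((p.1 k').val - (p.2 k').val) = (p.1 k').val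
      have := hd k'
      omega
    · funext k'
      exact Fin.ext rfl
  · intro g hg
    funext ζ
    obtain ⟨k', b⟩ := ζ
    cases b
    · show g (k', true) + g (k', false) - g (k', true) = g (k', false)
      omega
    · rfl
  · intro p hp
    obtain ⟨hm, hd⟩ := (Finset.mem_filter.mp hp).2
    simp only [wq, indR]
    exact (term_eq π q k (fun k' => (p.1 k').val) (fun k' => (p.2 k').val) hd).symm

/-- Theorem 1, no-tie part (Eq. (2)): in a stochastic blockmodel `SBM([n],B,π)`, the
probability that the classifier `γ(v*) = argmax_k D_k(v*)/n_k` misclassifies `v*` with no tie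
(i.e. some class `k' ≠ Y(v*)` has strictly larger normalized degree, with the convention
`0/0 = 0`, which is Lean's division convention) equals
`Σ_{(n₁,…,n_K): Σn_k = n-1} multinomial(n-1; n₁,…,n_K) Π_k π_k^{n_k}
  Σ_k π_k P[Bin(n_k,B_kk)/n_k < max_{k'≠k} Bin(n_{k'},B_{kk'})/n_{k'}]`,
the binomials being mutually independent. -/
theorem sbm_misclassification_probability
    (n K : ℕ) (hn : 2 ≤ n) (hK : 1 ≤ K)
    (B : Fin K → Fin K → ℝ) (hB : ∀ k k', B k k' ∈ Set.Icc (0 : ℝ) 1)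
    (hBsym : ∀ k k', B k k' = B k' k)
    (π : Fin K → ℝ) (hπ : ∀ k, 0 ≤ π k) (hπ1 : ∑ k, π k = 1)
    (vstar : Fin n) :
    (∑ c : (Fin n → Fin K) × (EPair n → Bool),
        if ∃ k', k' ≠ c.1 vstar ∧
            (Dk c vstar (c.1 vstar) : ℝ) / (nk c.1 vstar (c.1 vstar) : ℝ)
              < (Dk c vstar k' : ℝ) / (nk c.1 vstar k' : ℝ)
        then sbmWeight B π c else 0)
      = ∑ m ∈ Finset.univ.filter (fun m : Fin K → Fin n => ∑ k, (m k).val = n - 1),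
          (Nat.multinomial Finset.univ (fun k => (m k).val) : ℝ) *
            (∏ k, π k ^ (m k).val) *
            ∑ k, π k *
              ∑ d ∈ Finset.univ.filter (fun d : Fin K → Fin n => ∀ k', (d k').val ≤ (m k').val),
                (∏ k', fBin (d k').val (m k').val (B k k')) *
                  (if ∃ k', k' ≠ k ∧
                      ((d k).val : ℝ) / ((m k).val : ℝ) < ((d k').val : ℝ) / ((m k').val : ℝ)
                   then 1 else 0) := by
  classical
  have cardV : Fintype.card {v : Fin n // v ≠ vstar} = n - 1 := by
    simp [Fintype.card_subtype_compl]
  -- the pointwise identity for a single configuration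
  have key : ∀ (k : Fin K) (z : {v : Fin n // v ≠ vstar} → Fin K × Bool)
      (a' : {e : EPair n // e.val.1 ≠ vstar ∧ e.val.2 ≠ vstar} → Bool),
      (if ∃ k', k' ≠ (configEquiv vstar K (k, z, a')).1 vstar ∧
          (Dk (configEquiv vstar K (k, z, a')) vstar ((configEquiv vstar K (k, z, a')).1 vstar) : ℝ)
              / (nk (configEquiv vstar K (k, z, a')).1 vstar
                  ((configEquiv vstar K (k, z, a')).1 vstar) : ℝ)
            < (Dk (configEquiv vstar K (k, z, a')) vstar k' : ℝ)
              / (nk (configEquiv vstar K (k, z, a')).1 vstar k' : ℝ)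
        then sbmWeight B π (configEquiv vstar K (k, z, a')) else 0)
      = π k * ((∏ v, wq π (fun j => B j k) (z v))
            * indR k (fun ζ => (Finset.univ.filter
                fun v : {v : Fin n // v ≠ vstar} => z v = ζ).card))
          * (∏ e' : {e : EPair n // e.val.1 ≠ vstar ∧ e.val.2 ≠ vstar},
              (if a' e' then B (mkY vstar k z e'.val.val.1) (mkY vstar k z e'.val.val.2)
               else 1 - B (mkY vstar k z e'.val.val.1) (mkY vstar k z e'.val.val.2))) := by
    intro k z a'
    have hc : configEquiv vstar K (k, z, a') = (mkY vstar k z, mkA vstar z a') := rfl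
    rw [hc]
    simp only [wq, indR]
    simp only [Dk_eq vstar k z a', nk_eq vstar k z, mkY_vstar]
    by_cases hcond : ∃ k', k' ≠ k ∧
        (((Finset.univ.filter fun v : {v : Fin n // v ≠ vstar} => z v = (k, true)).card : ℝ)
          / (((Finset.univ.filter fun v : {v : Fin n // v ≠ vstar} => z v = (k, true)).card
              + (Finset.univ.filter fun v : {v : Fin n // v ≠ vstar} =>
                  z v = (k, false)).card : ℕ) : ℝ)
        < ((Finset.univ.filter fun v : {v : Fin n // v ≠ vstar} => z v = (k', true)).card : ℝ)
          / (((Finset.univ.filter fun v : {v : Fin n // v ≠ vstar} => z v = (k', true)).card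
              + (Finset.univ.filter fun v : {v : Fin n // v ≠ vstar} =>
                  z v = (k', false)).card : ℕ) : ℝ))
    · rw [if_pos hcond, if_pos hcond, sbmWeight_fact vstar B π hBsym k z a']
      ring
    · rw [if_neg hcond, if_neg hcond]
      ring
  -- the per-class value of the inner configuration sum
  have hk : ∀ k : Fin K,
      (∑ p : ({v : Fin n // v ≠ vstar} → Fin K × Bool) ×
          ({e : EPair n // e.val.1 ≠ vstar ∧ e.val.2 ≠ vstar} → Bool),
        (if ∃ k', k' ≠ (configEquiv vstar K (k, p)).1 vstar ∧
            (Dk (configEquiv vstar K (k, p)) vstar ((configEquiv vstar K (k, p)).1 vstar) : ℝ)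
                / (nk (configEquiv vstar K (k, p)).1 vstar
                    ((configEquiv vstar K (k, p)).1 vstar) : ℝ)
              < (Dk (configEquiv vstar K (k, p)) vstar k' : ℝ)
                / (nk (configEquiv vstar K (k, p)).1 vstar k' : ℝ)
          then sbmWeight B π (configEquiv vstar K (k, p)) else 0))
      = π k * ∑ m ∈ Finset.univ.filter (fun m : Fin K → Fin n => ∑ k, (m k).val = n - 1),
          ∑ d ∈ Finset.univ.filter (fun d : Fin K → Fin n => ∀ k', (d k').val ≤ (m k').val),
            ((Nat.multinomial Finset.univ (fun j => (m j).val) : ℝ)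
                * (∏ k', π k' ^ (m k').val))
              * ((∏ k', fBin (d k').val (m k').val (B k' k))
                * (if ∃ k', k' ≠ k ∧ (((d k).val : ℝ) / ((m k).val : ℝ)
                    < ((d k').val : ℝ) / ((m k').val : ℝ)) then 1 else 0)) := by
    intro k
    rw [Fintype.sum_prod_type]
    calc (∑ z : {v : Fin n // v ≠ vstar} → Fin K × Bool,
          ∑ a' : {e : EPair n // e.val.1 ≠ vstar ∧ e.val.2 ≠ vstar} → Bool,
            (if ∃ k', k' ≠ (configEquiv vstar K (k, z, a')).1 vstar ∧
                (Dk (configEquiv vstar K (k, z, a')) vstar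
                    ((configEquiv vstar K (k, z, a')).1 vstar) : ℝ)
                    / (nk (configEquiv vstar K (k, z, a')).1 vstar
                        ((configEquiv vstar K (k, z, a')).1 vstar) : ℝ)
                  < (Dk (configEquiv vstar K (k, z, a')) vstar k' : ℝ)
                    / (nk (configEquiv vstar K (k, z, a')).1 vstar k' : ℝ)
              then sbmWeight B π (configEquiv vstar K (k, z, a')) else 0))
        = ∑ z : {v : Fin n // v ≠ vstar} → Fin K × Bool,
            (π k * ((∏ v, wq π (fun j => B j k) (z v))
              * indR k (fun ζ => (Finset.univ.filter
                  fun v : {v : Fin n // v ≠ vstar} => z v = ζ).card)))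
            * ∑ a' : {e : EPair n // e.val.1 ≠ vstar ∧ e.val.2 ≠ vstar} → Bool,
                ∏ e' : {e : EPair n // e.val.1 ≠ vstar ∧ e.val.2 ≠ vstar},
                  (if a' e' then B (mkY vstar k z e'.val.val.1) (mkY vstar k z e'.val.val.2)
                   else 1 - B (mkY vstar k z e'.val.val.1) (mkY vstar k z e'.val.val.2)) := by
          refine Finset.sum_congr rfl fun z _ => ?_
          rw [Finset.mul_sum]
          exact Finset.sum_congr rfl fun a' _ => key k z a'
      _ = ∑ z : {v : Fin n // v ≠ vstar} → Fin K × Bool,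
            (π k * ((∏ v, wq π (fun j => B j k) (z v))
              * indR k (fun ζ => (Finset.univ.filter
                  fun v : {v : Fin n // v ≠ vstar} => z v = ζ).card))) := by
          refine Finset.sum_congr rfl fun z _ => ?_
          rw [sum_prod_bernoulli
            (fun e' : {e : EPair n // e.val.1 ≠ vstar ∧ e.val.2 ≠ vstar} =>
              B (mkY vstar k z e'.val.val.1) (mkY vstar k z e'.val.val.2)), mul_one]
      _ = π k * ∑ z : {v : Fin n // v ≠ vstar} → Fin K × Bool,
            (∏ v, wq π (fun j => B j k) (z v))
              * indR k (fun ζ => (Finset.univ.filter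
                  fun v : {v : Fin n // v ≠ vstar} => z v = ζ).card) := by
          rw [Finset.mul_sum]
      _ = π k * ∑ g ∈ Finset.piAntidiag Finset.univ
            (Fintype.card {v : Fin n // v ≠ vstar}),
            (Nat.multinomial Finset.univ g : ℝ)
              * (∏ b, wq π (fun j => B j k) b ^ g b) * indR k g := by
          rw [sum_group (wq π (fun j => B j k)) (indR k)]
      _ = π k * ∑ g ∈ Finset.piAntidiag Finset.univ (n - 1),
            (Nat.multinomial Finset.univ g : ℝ)
              * (∏ ζ, wq π (fun j => B j k) ζ ^ g ζ) * indR k g := by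
          rw [cardV]
      _ = π k * ∑ m ∈ Finset.univ.filter (fun m : Fin K → Fin n => ∑ k, (m k).val = n - 1),
          ∑ d ∈ Finset.univ.filter (fun d : Fin K → Fin n => ∀ k', (d k').val ≤ (m k').val),
            ((Nat.multinomial Finset.univ (fun j => (m j).val) : ℝ)
                * (∏ k', π k' ^ (m k').val))
              * ((∏ k', fBin (d k').val (m k').val (B k' k))
                * (if ∃ k', k' ≠ k ∧ (((d k).val : ℝ) / ((m k).val : ℝ)
                    < ((d k').val : ℝ) / ((m k').val : ℝ)) then 1 else 0)) := by
          rw [reindex hn π (fun j => B j k) k]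
  -- assemble
  rw [← Equiv.sum_comp (configEquiv vstar K) (fun c : (Fin n → Fin K) × (EPair n → Bool) =>
      if ∃ k', k' ≠ c.1 vstar ∧
          (Dk c vstar (c.1 vstar) : ℝ) / (nk c.1 vstar (c.1 vstar) : ℝ)
            < (Dk c vstar k' : ℝ) / (nk c.1 vstar k' : ℝ)
      then sbmWeight B π c else 0)]
  rw [Fintype.sum_prod_type]
  calc (∑ k : Fin K,
        ∑ p : ({v : Fin n // v ≠ vstar} → Fin K × Bool) ×
            ({e : EPair n // e.val.1 ≠ vstar ∧ e.val.2 ≠ vstar} → Bool),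
          (if ∃ k', k' ≠ (configEquiv vstar K (k, p)).1 vstar ∧
              (Dk (configEquiv vstar K (k, p)) vstar ((configEquiv vstar K (k, p)).1 vstar) : ℝ)
                  / (nk (configEquiv vstar K (k, p)).1 vstar
                      ((configEquiv vstar K (k, p)).1 vstar) : ℝ)
                < (Dk (configEquiv vstar K (k, p)) vstar k' : ℝ)
                  / (nk (configEquiv vstar K (k, p)).1 vstar k' : ℝ)
            then sbmWeight B π (configEquiv vstar K (k, p)) else 0))
      = ∑ k : Fin K,
          π k * ∑ m ∈ Finset.univ.filter (fun m : Fin K → Fin n => ∑ k, (m k).val = n - 1),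
          ∑ d ∈ Finset.univ.filter (fun d : Fin K → Fin n => ∀ k', (d k').val ≤ (m k').val),
            ((Nat.multinomial Finset.univ (fun j => (m j).val) : ℝ)
                * (∏ k', π k' ^ (m k').val))
              * ((∏ k', fBin (d k').val (m k').val (B k' k))
                * (if ∃ k', k' ≠ k ∧ (((d k).val : ℝ) / ((m k).val : ℝ)
                    < ((d k').val : ℝ) / ((m k').val : ℝ)) then 1 else 0)) := by
        exact Finset.sum_congr rfl fun k _ => hk k
    _ = ∑ k : Fin K,
          ∑ m ∈ Finset.univ.filter (fun m : Fin K → Fin n => ∑ k, (m k).val = n - 1),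
          π k * ∑ d ∈ Finset.univ.filter
              (fun d : Fin K → Fin n => ∀ k', (d k').val ≤ (m k').val),
            ((Nat.multinomial Finset.univ (fun j => (m j).val) : ℝ)
                * (∏ k', π k' ^ (m k').val))
              * ((∏ k', fBin (d k').val (m k').val (B k' k))
                * (if ∃ k', k' ≠ k ∧ (((d k).val : ℝ) / ((m k).val : ℝ)
                    < ((d k').val : ℝ) / ((m k').val : ℝ)) then 1 else 0)) := by
        exact Finset.sum_congr rfl fun k _ => Finset.mul_sum _ _ _
    _ = ∑ m ∈ Finset.univ.filter (fun m : Fin K → Fin n => ∑ k, (m k).val = n - 1),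
          ∑ k : Fin K,
          π k * ∑ d ∈ Finset.univ.filter
              (fun d : Fin K → Fin n => ∀ k', (d k').val ≤ (m k').val),
            ((Nat.multinomial Finset.univ (fun j => (m j).val) : ℝ)
                * (∏ k', π k' ^ (m k').val))
              * ((∏ k', fBin (d k').val (m k').val (B k' k))
                * (if ∃ k', k' ≠ k ∧ (((d k).val : ℝ) / ((m k).val : ℝ)
                    < ((d k').val : ℝ) / ((m k').val : ℝ)) then 1 else 0)) :=
        Finset.sum_comm
    _ = ∑ m ∈ Finset.univ.filter (fun m : Fin K → Fin n => ∑ k, (m k).val = n - 1),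
          (Nat.multinomial Finset.univ (fun k => (m k).val) : ℝ) *
            (∏ k, π k ^ (m k).val) *
            ∑ k, π k *
              ∑ d ∈ Finset.univ.filter
                  (fun d : Fin K → Fin n => ∀ k', (d k').val ≤ (m k').val),
                (∏ k', fBin (d k').val (m k').val (B k k')) *
                  (if ∃ k', k' ≠ k ∧
                      ((d k).val : ℝ) / ((m k).val : ℝ) < ((d k').val : ℝ) / ((m k').val : ℝ)
                   then 1 else 0) := by
        refine Finset.sum_congr rfl fun m _ => ?_
        rw [Finset.mul_sum]
        refine Finset.sum_congr rfl fun k _ => ?_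
        have hswap : ∀ d ∈ Finset.univ.filter
            (fun d : Fin K → Fin n => ∀ k', (d k').val ≤ (m k').val),
            ((Nat.multinomial Finset.univ (fun j => (m j).val) : ℝ)
                * (∏ k', π k' ^ (m k').val))
              * ((∏ k', fBin (d k').val (m k').val (B k' k))
                * (if ∃ k', k' ≠ k ∧ (((d k).val : ℝ) / ((m k).val : ℝ)
                    < ((d k').val : ℝ) / ((m k').val : ℝ)) then 1 else 0))
            = ((Nat.multinomial Finset.univ (fun j => (m j).val) : ℝ)
                * (∏ k', π k' ^ (m k').val))
              * ((∏ k', fBin (d k').val (m k').val (B k k'))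
                * (if ∃ k', k' ≠ k ∧ (((d k).val : ℝ) / ((m k).val : ℝ)
                    < ((d k').val : ℝ) / ((m k').val : ℝ)) then 1 else 0)) := by
          intro d _
          have hpb : (∏ k', fBin (d k').val (m k').val (B k' k))
              = ∏ k', fBin (d k').val (m k').val (B k k') :=
            Finset.prod_congr rfl fun k' _ => by rw [hBsym k' k]
          rw [hpb]
        rw [Finset.sum_congr rfl hswap, ← Finset.mul_sum]
        ring
end

section
/- Let 0 < b < a < 1 and let n ≥ 1. Let Y be uniform on {1,2}, and conditionally on Y = k let D₁ ~ Bin(n, B_{k1}) and D₂ ~ Bin(n, B_{k2}) be independent, where B₁₁ = B₂₂ = a and B₁₂ = B₂₁ = b. Then for all d₁, d₂ ∈ {0,…,n}: P[Y = 1 | D₁ = d₁, D₂ = d₂] > P[Y = 2 | D₁ = d₁, D₂ = d₂] if and only if d₁ > d₂, and the two posterior probabilities are equal if and only if d₁ = d₂. -/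
open MeasureTheory ProbabilityTheory

lemma fBin_pos {d n : ℕ} (h : d ≤ n) {r : ℝ} (h0 : 0 < r) (h1 : r < 1) : 0 < fBin d n r := by
  unfold fBin
  have hc : 0 < (n.choose d : ℝ) := by exact_mod_cast Nat.choose_pos h
  have : 0 < 1 - r := by linarith
  positivity

lemma key_ineq {n d₁ d₂ : ℕ} {a b : ℝ} (hb : 0 < b) (hba : b < a) (ha : a < 1)
    (h1 : d₁ ≤ n) (h2 : d₂ < d₁) :
    fBin d₁ n b * fBin d₂ n a < fBin d₁ n a * fBin d₂ n b := by
  obtain ⟨t, rfl⟩ : ∃ t, d₁ = d₂ + t := ⟨d₁ - d₂, by omega⟩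
  have ht : t ≠ 0 := by omega
  set m := n - (d₂ + t) with hm
  have hn2 : n - d₂ = m + t := by omega
  have ha0 : 0 < a := lt_trans hb hba
  have hb1 : 0 < 1 - b := by linarith
  have ha1 : 0 < 1 - a := by linarith
  have hc1 : 0 < (n.choose (d₂ + t) : ℝ) := by exact_mod_cast Nat.choose_pos h1
  have hc2 : 0 < (n.choose d₂ : ℝ) := by
    exact_mod_cast Nat.choose_pos (le_trans (Nat.le_add_right d₂ t) h1)
  have key : (b * (1 - a)) ^ t < (a * (1 - b)) ^ t := by
    apply pow_lt_pow_left₀ _ (by positivity) ht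
    nlinarith
  rw [mul_pow, mul_pow] at key
  have hK : 0 < (n.choose (d₂ + t) : ℝ) * (n.choose d₂ : ℝ) * a ^ d₂ * b ^ d₂ *
      (1 - a) ^ m * (1 - b) ^ m := by positivity
  unfold fBin
  rw [hn2]
  have e1 : (n.choose (d₂ + t) : ℝ) * b ^ (d₂ + t) * (1 - b) ^ m *
      ((n.choose d₂ : ℝ) * a ^ d₂ * (1 - a) ^ (m + t))
      = ((n.choose (d₂ + t) : ℝ) * (n.choose d₂ : ℝ) * a ^ d₂ * b ^ d₂ *
        (1 - a) ^ m * (1 - b) ^ m) * (b ^ t * (1 - a) ^ t) := by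
    rw [pow_add, pow_add]; ring
  have e2 : (n.choose (d₂ + t) : ℝ) * a ^ (d₂ + t) * (1 - a) ^ m *
      ((n.choose d₂ : ℝ) * b ^ d₂ * (1 - b) ^ (m + t))
      = ((n.choose (d₂ + t) : ℝ) * (n.choose d₂ : ℝ) * a ^ d₂ * b ^ d₂ *
        (1 - a) ^ m * (1 - b) ^ m) * (a ^ t * (1 - b) ^ t) := by
    rw [pow_add, pow_add]; ring
  rw [e1, e2]
  exact mul_lt_mul_of_pos_left key hK

lemma cmp_lemma {n d₁ d₂ : ℕ} {a b : ℝ} (hb : 0 < b) (hba : b < a) (ha : a < 1)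
    (h1 : d₁ ≤ n) (h2 : d₂ ≤ n) :
    (fBin d₁ n b * fBin d₂ n a < fBin d₁ n a * fBin d₂ n b ↔ d₂ < d₁) ∧
    (fBin d₁ n a * fBin d₂ n b = fBin d₁ n b * fBin d₂ n a ↔ d₁ = d₂) := by
  rcases lt_trichotomy d₁ d₂ with h | h | h
  · have := key_ineq hb hba ha h2 h
    constructor
    · constructor
      · intro hlt; linarith [mul_comm (fBin d₂ n b) (fBin d₁ n a),
          mul_comm (fBin d₂ n a) (fBin d₁ n b)]
      · omega
    · constructor
      · intro he
        have : fBin d₂ n b * fBin d₁ n a = fBin d₂ n a * fBin d₁ n b := by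
          linarith [mul_comm (fBin d₁ n a) (fBin d₂ n b),
            mul_comm (fBin d₁ n b) (fBin d₂ n a)]
        linarith
      · omega
  · subst h
    constructor
    · constructor
      · intro hlt; linarith [mul_comm (fBin d₁ n b) (fBin d₁ n a)]
      · omega
    · simp [mul_comm]
  · have := key_ineq hb hba ha h1 h
    exact ⟨⟨fun _ => h, fun _ => this⟩,
      ⟨fun he => absurd he.symm (ne_of_lt this), fun he => by omega⟩⟩

/-- Bayes optimality of the simple vertex classifier in the two-block symmetric SBM:
`Y` is uniform on the two classes (`Fin 2` with `0` ≡ class 1, `1` ≡ class 2), and conditionally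
on `Y = k` the block degrees `D₁ ~ Bin(n, B_{k1})` and `D₂ ~ Bin(n, B_{k2})` are independent,
where `B₁₁ = B₂₂ = a`, `B₁₂ = B₂₁ = b`, `0 < b < a < 1` (the joint hypothesis records exactly
this model). Then for all `d₁, d₂ ∈ {0,…,n}`, the posterior satisfies
`P[Y = 1 | D₁ = d₁, D₂ = d₂] > P[Y = 2 | D₁ = d₁, D₂ = d₂]` iff `d₁ > d₂`, with equality of the
posteriors iff `d₁ = d₂`. -/
theorem two_block_posterior_comparison
    {Ω : Type*} [MeasurableSpace Ω] (μ : Measure Ω) [IsProbabilityMeasure μ]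
    (n : ℕ) (hn : 1 ≤ n) (a b : ℝ) (hb : 0 < b) (hba : b < a) (ha : a < 1)
    (B : Fin 2 → Fin 2 → ℝ)
    (hB11 : B 0 0 = a) (hB22 : B 1 1 = a) (hB12 : B 0 1 = b) (hB21 : B 1 0 = b)
    (Y : Ω → Fin 2) (D₁ D₂ : Ω → ℕ)
    (hY : Measurable Y) (hD₁ : Measurable D₁) (hD₂ : Measurable D₂)
    (hjoint : ∀ (k : Fin 2) (d₁ d₂ : ℕ),
      μ {ω | Y ω = k ∧ D₁ ω = d₁ ∧ D₂ ω = d₂}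
        = ENNReal.ofReal ((1 / 2) * (fBin d₁ n (B k 0) * fBin d₂ n (B k 1)))) :
    ∀ d₁ ≤ n, ∀ d₂ ≤ n,
      ((ProbabilityTheory.cond μ {ω | D₁ ω = d₁ ∧ D₂ ω = d₂}) {ω | Y ω = 1}
          < (ProbabilityTheory.cond μ {ω | D₁ ω = d₁ ∧ D₂ ω = d₂}) {ω | Y ω = 0}
        ↔ d₂ < d₁) ∧
      ((ProbabilityTheory.cond μ {ω | D₁ ω = d₁ ∧ D₂ ω = d₂}) {ω | Y ω = 0}
          = (ProbabilityTheory.cond μ {ω | D₁ ω = d₁ ∧ D₂ ω = d₂}) {ω | Y ω = 1}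
        ↔ d₁ = d₂) := by
  intro d₁ h1 d₂ h2
  have ha0 : 0 < a := lt_trans hb hba
  have hb1 : b < 1 := lt_trans hba ha
  set s : Set Ω := {ω | D₁ ω = d₁ ∧ D₂ ω = d₂} with hs_def
  have hs : MeasurableSet s :=
    (hD₁ (measurableSet_singleton d₁)).inter (hD₂ (measurableSet_singleton d₂))
  set p₀ : ℝ := (1 / 2) * (fBin d₁ n a * fBin d₂ n b) with hp₀def
  set p₁ : ℝ := (1 / 2) * (fBin d₁ n b * fBin d₂ n a) with hp₁def
  have hfa1 : 0 < fBin d₁ n a := fBin_pos h1 ha0 ha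
  have hfb1 : 0 < fBin d₁ n b := fBin_pos h1 hb hb1
  have hfa2 : 0 < fBin d₂ n a := fBin_pos h2 ha0 ha
  have hfb2 : 0 < fBin d₂ n b := fBin_pos h2 hb hb1
  have hp₀ : 0 < p₀ := by rw [hp₀def]; positivity
  have hp₁ : 0 < p₁ := by rw [hp₁def]; positivity
  have hm0 : s ∩ {ω | Y ω = 0} = {ω | Y ω = 0 ∧ D₁ ω = d₁ ∧ D₂ ω = d₂} := by
    ext ω; simp [hs_def, Set.mem_inter_iff]; tauto
  have hm1 : s ∩ {ω | Y ω = 1} = {ω | Y ω = 1 ∧ D₁ ω = d₁ ∧ D₂ ω = d₂} := by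
    ext ω; simp [hs_def, Set.mem_inter_iff]; tauto
  have hμ0 : μ (s ∩ {ω | Y ω = 0}) = ENNReal.ofReal p₀ := by
    rw [hm0, hjoint 0 d₁ d₂, hB11, hB12]
  have hμ1 : μ (s ∩ {ω | Y ω = 1}) = ENNReal.ofReal p₁ := by
    rw [hm1, hjoint 1 d₁ d₂, hB21, hB22]
  have hspos : μ s ≠ 0 := by
    intro h
    have : μ (s ∩ {ω | Y ω = 0}) = 0 :=
      le_antisymm (le_trans (measure_mono (Set.inter_subset_left)) h.le) (zero_le)
    rw [hμ0] at this
    exact absurd this (by simp [ENNReal.ofReal_eq_zero]; linarith)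
  have hstop : μ s ≠ ⊤ := measure_ne_top μ s
  have hinv0 : (μ s)⁻¹ ≠ 0 := ENNReal.inv_ne_zero.mpr hstop
  have hinvtop : (μ s)⁻¹ ≠ ⊤ := ENNReal.inv_ne_top.mpr hspos
  rw [cond_apply hs μ {ω | Y ω = 1}, cond_apply hs μ {ω | Y ω = 0}, hμ0, hμ1]
  obtain ⟨hlt, heq⟩ := cmp_lemma hb hba ha h1 h2
  constructor
  · rw [ENNReal.mul_lt_mul_iff_right hinv0 hinvtop,
      ENNReal.ofReal_lt_ofReal_iff hp₀]
    rw [← hlt]; constructor <;> intro h <;> [skip; skip] <;>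
      · rw [hp₀def, hp₁def] at *; linarith
  · rw [← heq]
    constructor
    · intro h
      have h' : ENNReal.ofReal p₀ = ENNReal.ofReal p₁ :=
        (ENNReal.mul_right_inj hinv0 hinvtop).mp h
      have := (ENNReal.ofReal_eq_ofReal_iff hp₀.le hp₁.le).mp h'
      rw [hp₀def, hp₁def] at this; linarith
    · intro h
      have : p₀ = p₁ := by rw [hp₀def, hp₁def]; linarith
      rw [this]
end
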